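/- Let e* be a behaviour maximizing the score over behaviours with SF(e) ≤ σ that are deterministic on a distinguished context C, for an n-party binary-input game. Then S^σ_C := score(e*) satisfies S^σ_C ≤ S_cl^{ξ=σ}, the maximum score over behaviours with contextual fraction at most σ; in particular for the CHSH game, S^σ_C ≤ (3 + σ)/4. -/

import Mathlib

open Finset

/-- A behaviour for the CHSH scenario. -/
def IsBehaviour (p : Fin 2 → Fin 2 → Fin 2 → Fin 2 → ℝ) : Prop :=
  (∀ a b x y, 0 ≤ p a b x y) ∧
  (∀ x y : Fin 2, ∑ a : Fin 2, ∑ b : Fin 2, p a b x y = 1)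

/-- No-signalling: each party's marginals are independent of the other's input. -/
def IsNS (p : Fin 2 → Fin 2 → Fin 2 → Fin 2 → ℝ) : Prop :=
  (∀ a x y y' : Fin 2, ∑ b : Fin 2, p a b x y = ∑ b : Fin 2, p a b x y') ∧
  (∀ b y x x' : Fin 2, ∑ a : Fin 2, p a b x y = ∑ a : Fin 2, p a b x' y)

/-- Deterministic non-signalling behaviour given by local strategies `f, g`. -/
def detBehaviour (f g : Fin 2 → Fin 2) : Fin 2 → Fin 2 → Fin 2 → Fin 2 → ℝ :=
  fun a b x y => if a = f x ∧ b = g y then 1 else 0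

/-- Convex combination of deterministic non-signalling behaviours. -/
def IsNoncontextual (p : Fin 2 → Fin 2 → Fin 2 → Fin 2 → ℝ) : Prop :=
  ∃ w : (Fin 2 → Fin 2) → (Fin 2 → Fin 2) → ℝ,
    (∀ f g, 0 ≤ w f g) ∧
    (∑ f : Fin 2 → Fin 2, ∑ g : Fin 2 → Fin 2, w f g = 1) ∧
    (∀ a b x y, p a b x y =
      ∑ f : Fin 2 → Fin 2, ∑ g : Fin 2 → Fin 2, w f g * detBehaviour f g a b x y)

/-- Signalling fraction: 1 minus the maximal non-signalling weight in affine
decompositions of `p`. -/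
noncomputable def SF (p : Fin 2 → Fin 2 → Fin 2 → Fin 2 → ℝ) : ℝ :=
  1 - sSup {s : ℝ | s ∈ Set.Icc (0:ℝ) 1 ∧
    ∃ q r : Fin 2 → Fin 2 → Fin 2 → Fin 2 → ℝ,
      IsNS q ∧ IsBehaviour q ∧ IsBehaviour r ∧
      ∀ a b x y, p a b x y = s * q a b x y + (1 - s) * r a b x y}

/-- Contextual fraction: 1 minus the maximal non-contextual weight in affine
decompositions of `p`. -/
noncomputable def CF (p : Fin 2 → Fin 2 → Fin 2 → Fin 2 → ℝ) : ℝ :=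
  1 - sSup {s : ℝ | s ∈ Set.Icc (0:ℝ) 1 ∧
    ∃ q r : Fin 2 → Fin 2 → Fin 2 → Fin 2 → ℝ,
      IsNoncontextual q ∧ IsBehaviour q ∧ IsBehaviour r ∧
      ∀ a b x y, p a b x y = s * q a b x y + (1 - s) * r a b x y}

/-- The CHSH game score with uniform inputs: winning condition `a ⊕ b = x·y`. -/
noncomputable def chshScore (p : Fin 2 → Fin 2 → Fin 2 → Fin 2 → ℝ) : ℝ :=
  (1/4) * ∑ x : Fin 2, ∑ y : Fin 2, ∑ a : Fin 2, ∑ b : Fin 2,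
    if a + b = x * y then p a b x y else 0

/-- The relaxed classical score `S_cl^ξ`: supremum of CHSH scores of behaviours with
contextual fraction at most `ξ`. -/
noncomputable def SclRelaxed (ξ : ℝ) : ℝ :=
  sSup {S : ℝ | ∃ p : Fin 2 → Fin 2 → Fin 2 → Fin 2 → ℝ,
    IsBehaviour p ∧ CF p ≤ ξ ∧ S = chshScore p}


lemma score_decomp (p q r : Fin 2 → Fin 2 → Fin 2 → Fin 2 → ℝ) (s : ℝ)
    (h : ∀ a b x y, p a b x y = s * q a b x y + (1 - s) * r a b x y) :
    chshScore p = s * chshScore q + (1 - s) * chshScore r := by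
  simp +decide only [chshScore, Fin.sum_univ_two, h, if_true, if_false]
  ring

lemma behaviour_score_le_one (p : Fin 2 → Fin 2 → Fin 2 → Fin 2 → ℝ)
    (hB : IsBehaviour p) : chshScore p ≤ 1 := by
  have h : ∀ x y : Fin 2, (∑ a : Fin 2, ∑ b : Fin 2, if a + b = x * y then p a b x y else 0) ≤ 1 := by
    intro x y
    rw [← hB.2 x y]
    apply Finset.sum_le_sum; intro a _
    apply Finset.sum_le_sum; intro b _
    split
    · exact le_refl _
    · exact hB.1 a b x y
  calc chshScore p ≤ (1/4) * ∑ x : Fin 2, ∑ y : Fin 2, (1:ℝ) := by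
        apply mul_le_mul_of_nonneg_left _ (by norm_num)
        apply Finset.sum_le_sum; intro x _
        apply Finset.sum_le_sum; intro y _
        exact h x y
    _ = 1 := by simp [Fin.sum_univ_two]; norm_num

lemma score_nonneg (p : Fin 2 → Fin 2 → Fin 2 → Fin 2 → ℝ)
    (hB : IsBehaviour p) : 0 ≤ chshScore p := by
  apply mul_nonneg (by norm_num)
  apply Finset.sum_nonneg; intro x _
  apply Finset.sum_nonneg; intro y _
  apply Finset.sum_nonneg; intro a _
  apply Finset.sum_nonneg; intro b _
  split
  · exact hB.1 a b x y
  · exact le_refl _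

lemma det_score (f g : Fin 2 → Fin 2) : chshScore (detBehaviour f g) ≤ 3/4 := by
  obtain h0 | h0 := (by omega : f 0 = 0 ∨ f 0 = 1) <;>
  obtain h1 | h1 := (by omega : f 1 = 0 ∨ f 1 = 1) <;>
  obtain k0 | k0 := (by omega : g 0 = 0 ∨ g 0 = 1) <;>
  obtain k1 | k1 := (by omega : g 1 = 0 ∨ g 1 = 1) <;>
  simp [chshScore, detBehaviour, Fin.sum_univ_two, h0, h1, k0, k1] <;> norm_num

lemma nc_score_eq (q : Fin 2 → Fin 2 → Fin 2 → Fin 2 → ℝ)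
    (w : (Fin 2 → Fin 2) → (Fin 2 → Fin 2) → ℝ)
    (hwq : ∀ a b x y, q a b x y =
      ∑ f : Fin 2 → Fin 2, ∑ g : Fin 2 → Fin 2, w f g * detBehaviour f g a b x y) :
    chshScore q = ∑ f : Fin 2 → Fin 2, ∑ g : Fin 2 → Fin 2, w f g * chshScore (detBehaviour f g) := by
  simp +decide only [chshScore, Fin.sum_univ_two, hwq, if_true, if_false, add_zero, zero_add]
  simp only [← Finset.sum_add_distrib, Finset.mul_sum]
  apply Finset.sum_congr rfl; intro f _
  apply Finset.sum_congr rfl; intro g _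
  ring


def pairEquiv (x0 : Fin 2) : (Fin 2 × Fin 2) ≃ (Fin 2 → Fin 2) where
  toFun p := fun x => if x = x0 then p.1 else p.2
  invFun f := (f x0, f (x0 + 1))
  left_inv p := by
    obtain ⟨u, v⟩ := p
    simp only [Prod.mk.injEq]
    constructor
    · simp
    · rw [if_neg (by omega)]
  right_inv f := by
    funext x
    by_cases h : x = x0
    · simp [h]
    · have hx : x = x0 + 1 := by omega
      subst hx
      show (if x0 + 1 = x0 then _ else _) = _
      rw [if_neg (by omega)]

lemma pairEquiv_fst (x0 u v : Fin 2) : pairEquiv x0 (u, v) x0 = u := if_pos rfl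

lemma pairEquiv_snd (x0 u v : Fin 2) : pairEquiv x0 (u, v) (x0 + 1) = v := if_neg (by omega)

lemma sum_fun_eq (x0 : Fin 2) (F : (Fin 2 → Fin 2) → ℝ) :
    ∑ f : Fin 2 → Fin 2, F f = ∑ u : Fin 2, ∑ v : Fin 2, F (pairEquiv x0 (u, v)) := by
  rw [← Equiv.sum_comp (pairEquiv x0) F, Fintype.sum_prod_type]

set_option maxHeartbeats 1000000 in
set_option synthInstance.maxHeartbeats 100000 in
lemma ns_det_nc (q : Fin 2 → Fin 2 → Fin 2 → Fin 2 → ℝ) (hNS : IsNS q) (hB : IsBehaviour q)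
    (x0 y0 a0 b0 : Fin 2) (h1 : q a0 b0 x0 y0 = 1) : IsNoncontextual q := by
  obtain ⟨hpos, hsum⟩ := hB
  obtain ⟨hA, hBm⟩ := hNS
  -- all other entries at the distinguished context vanish
  have hzero : ∀ a b : Fin 2, ¬(a = a0 ∧ b = b0) → q a b x0 y0 = 0 := by
    intro a b hab
    have hs := hsum x0 y0
    simp only [Fin.sum_univ_two] at hs
    have q1 := hpos 0 0 x0 y0; have q2 := hpos 0 1 x0 y0
    have q3 := hpos 1 0 x0 y0; have q4 := hpos 1 1 x0 y0
    clear hpos hsum hA hBm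
    obtain ha|ha := (by omega : a0 = 0 ∨ a0 = 1) <;> obtain hb|hb := (by omega : b0 = 0 ∨ b0 = 1) <;>
      obtain ha'|ha' := (by omega : a = 0 ∨ a = 1) <;> obtain hb'|hb' := (by omega : b = 0 ∨ b = 1) <;>
      subst ha hb ha' hb' <;> simp_all <;>
      linarith
  have hrow : ∀ a : Fin 2, ¬(a = a0) → ∀ b y, q a b x0 y = 0 := by
    intro a ha b y
    have h2 := hA a x0 y y0
    simp only [Fin.sum_univ_two] at h2
    have e0 : q a 0 x0 y0 = 0 := hzero a 0 (by tauto)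
    have e1 : q a 1 x0 y0 = 0 := hzero a 1 (by tauto)
    obtain hb|hb := (by omega : b = 0 ∨ b = 1) <;> subst hb <;>
      linarith [hpos a 0 x0 y, hpos a 1 x0 y]
  have hcol : ∀ b : Fin 2, ¬(b = b0) → ∀ a x, q a b x y0 = 0 := by
    intro b hb a x
    have h2 := hBm b y0 x x0
    simp only [Fin.sum_univ_two] at h2
    have e0 : q 0 b x0 y0 = 0 := hzero 0 b (by tauto)
    have e1 : q 1 b x0 y0 = 0 := hzero 1 b (by tauto)
    obtain ha|ha := (by omega : a = 0 ∨ a = 1) <;> subst ha <;>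
      linarith [hpos 0 b x y0, hpos 1 b x y0]
  refine ⟨fun f g => if f x0 = a0 ∧ g y0 = b0 then q (f (x0+1)) (g (y0+1)) (x0+1) (y0+1) else 0,
    ?_, ?_, ?_⟩
  · intro f g
    dsimp only
    split
    · exact hpos _ _ _ _
    · exact le_refl _
  · rw [sum_fun_eq x0]
    have : ∀ u v : Fin 2,
        (∑ g : Fin 2 → Fin 2, if pairEquiv x0 (u,v) x0 = a0 ∧ g y0 = b0 then
          q (pairEquiv x0 (u,v) (x0+1)) (g (y0+1)) (x0+1) (y0+1) else 0)
        = ∑ s : Fin 2, ∑ t : Fin 2, if u = a0 ∧ s = b0 then q v t (x0+1) (y0+1) else 0 := by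
      intro u v
      rw [sum_fun_eq y0]
      simp only [pairEquiv_fst, pairEquiv_snd]
    simp only [this]
    have hs := hsum (x0+1) (y0+1)
    simp only [Fin.sum_univ_two] at hs ⊢
    obtain ha|ha := (by omega : a0 = 0 ∨ a0 = 1) <;> obtain hb|hb := (by omega : b0 = 0 ∨ b0 = 1) <;>
      subst ha hb <;> simp <;> linarith
  · intro a b x y
    rw [sum_fun_eq x0]
    have step : ∀ u v : Fin 2,
        (∑ g : Fin 2 → Fin 2,
          (if pairEquiv x0 (u,v) x0 = a0 ∧ g y0 = b0 then
            q (pairEquiv x0 (u,v) (x0+1)) (g (y0+1)) (x0+1) (y0+1) else 0) *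
            detBehaviour (pairEquiv x0 (u,v)) g a b x y)
        = ∑ s : Fin 2, ∑ t : Fin 2, (if u = a0 ∧ s = b0 then q v t (x0+1) (y0+1) else 0) *
            detBehaviour (pairEquiv x0 (u,v)) (pairEquiv y0 (s,t)) a b x y := by
      intro u v
      rw [sum_fun_eq y0]
      simp only [pairEquiv_fst, pairEquiv_snd]
    simp only [step]
    -- marginal facts, fully instantiated
    have hAm0 := hA 0 (x0+1) (y0+1) y0
    have hAm1 := hA 1 (x0+1) (y0+1) y0
    have hBm0 := hBm 0 (y0+1) (x0+1) x0
    have hBm1 := hBm 1 (y0+1) (x0+1) x0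
    have hs := hsum (x0+1) (y0+1)
    have r00 := hrow (a0+1) (by omega) 0 y0
    have r01 := hrow (a0+1) (by omega) 0 (y0+1)
    have r10 := hrow (a0+1) (by omega) 1 y0
    have r11 := hrow (a0+1) (by omega) 1 (y0+1)
    have c00 := hcol (b0+1) (by omega) 0 x0
    have c01 := hcol (b0+1) (by omega) 0 (x0+1)
    have c10 := hcol (b0+1) (by omega) 1 x0
    have c11 := hcol (b0+1) (by omega) 1 (x0+1)
    have z1 := hzero a0 (b0+1) (by omega)
    clear hA hBm hsum hzero hrow hcol step
    simp only [Fin.sum_univ_two] at hAm0 hAm1 hBm0 hBm1 hs ⊢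
    obtain hx|hx := (by omega : x = x0 ∨ x = x0 + 1) <;>
      obtain hy|hy := (by omega : y = y0 ∨ y = y0 + 1) <;> subst hx hy <;>
      simp only [detBehaviour, pairEquiv_fst, pairEquiv_snd] <;>
      obtain ha|ha := (by omega : a0 = 0 ∨ a0 = 1) <;>
      obtain hb|hb := (by omega : b0 = 0 ∨ b0 = 1) <;>
      obtain ha'|ha' := (by omega : a = 0 ∨ a = 1) <;>
      obtain hb'|hb' := (by omega : b = 0 ∨ b = 1) <;>
      subst ha hb ha' hb' <;>
      simp +decide only [show (0:Fin 2)+1 = 1 from rfl, show (1:Fin 2)+1 = 0 from rfl]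
        at r00 r01 r10 r11 c00 c01 c10 c11 z1 <;>
      simp +decide only [if_true, if_false, mul_one, mul_zero, zero_mul, one_mul,
        add_zero, zero_add, Fin.reduceAdd, Fin.isValue] <;>
      linarith

lemma nc_score_le (q : Fin 2 → Fin 2 → Fin 2 → Fin 2 → ℝ)
    (h : IsNoncontextual q) : chshScore q ≤ 3/4 := by
  obtain ⟨w, hw0, hw1, hwq⟩ := h
  rw [nc_score_eq q w hwq]
  calc ∑ f : Fin 2 → Fin 2, ∑ g : Fin 2 → Fin 2, w f g * chshScore (detBehaviour f g)
      ≤ ∑ f : Fin 2 → Fin 2, ∑ g : Fin 2 → Fin 2, w f g * (3/4) := by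
        apply Finset.sum_le_sum; intro f _
        apply Finset.sum_le_sum; intro g _
        exact mul_le_mul_of_nonneg_left (det_score f g) (hw0 f g)
    _ = 3/4 := by
        simp only [← Finset.sum_mul]
        rw [hw1, one_mul]

lemma det_is_behaviour (f g : Fin 2 → Fin 2) : IsBehaviour (detBehaviour f g) := by
  constructor
  · intro a b x y
    unfold detBehaviour
    split
    · norm_num
    · exact le_refl _
  · intro x y
    simp [detBehaviour, Fin.sum_univ_two]
    obtain h0 | h0 := (by omega : f x = 0 ∨ f x = 1) <;>
      obtain k0 | k0 := (by omega : g y = 0 ∨ g y = 1) <;> simp [h0, k0] <;> decide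

lemma det_nc (f g : Fin 2 → Fin 2) : IsNoncontextual (detBehaviour f g) := by
  refine ⟨fun f' g' => if f' = f ∧ g' = g then 1 else 0, ?_, ?_, ?_⟩
  · intro f' g'; dsimp only; split <;> norm_num
  · simp [ite_and, Finset.sum_ite_eq]
  · intro a b x y
    simp [ite_and, Finset.sum_ite_eq]

lemma det_zero (p : Fin 2 → Fin 2 → Fin 2 → Fin 2 → ℝ) (hB : IsBehaviour p)
    (x y a0 b0 : Fin 2) (h1 : p a0 b0 x y = 1) :
    ∀ a b : Fin 2, ¬(a = a0 ∧ b = b0) → p a b x y = 0 := by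
  obtain ⟨hpos, hsum⟩ := hB
  intro a b hab
  have hs := hsum x y
  simp only [Fin.sum_univ_two] at hs
  have q1 := hpos 0 0 x y; have q2 := hpos 0 1 x y
  have q3 := hpos 1 0 x y; have q4 := hpos 1 1 x y
  clear hpos hsum
  obtain ha|ha := (by omega : a0 = 0 ∨ a0 = 1) <;> obtain hb|hb := (by omega : b0 = 0 ∨ b0 = 1) <;>
    obtain ha'|ha' := (by omega : a = 0 ∨ a = 1) <;> obtain hb'|hb' := (by omega : b = 0 ∨ b = 1) <;>
    subst ha hb ha' hb' <;> simp_all <;>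
    linarith

lemma decomp_nc (estar q r : Fin 2 → Fin 2 → Fin 2 → Fin 2 → ℝ) (s : ℝ)
    (x y a0 b0 : Fin 2)
    (hB : IsBehaviour estar) (h1 : estar a0 b0 x y = 1)
    (hspos : 0 < s) (hs1 : s ≤ 1)
    (hNS : IsNS q) (hQ : IsBehaviour q) (hR : IsBehaviour r)
    (hdec : ∀ a b x' y', estar a b x' y' = s * q a b x' y' + (1 - s) * r a b x' y') :
    IsNoncontextual q := by
  apply ns_det_nc q hNS hQ x y a0 b0
  have hqz : ∀ a b : Fin 2, ¬(a = a0 ∧ b = b0) → q a b x y = 0 := by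
    intro a b hab
    have hez := det_zero estar hB x y a0 b0 h1 a b hab
    have hX : 0 ≤ s * q a b x y := mul_nonneg (le_of_lt hspos) (hQ.1 a b x y)
    have hY : 0 ≤ (1 - s) * r a b x y := mul_nonneg (by linarith) (hR.1 a b x y)
    have hXY : s * q a b x y + (1 - s) * r a b x y = 0 := by
      rw [← hdec]; exact hez
    have h0 : s * q a b x y = 0 := by linarith
    rcases mul_eq_zero.mp h0 with h | h
    · exact absurd h (ne_of_gt hspos)
    · exact h
  have hsq := hQ.2 x y
  simp only [Fin.sum_univ_two] at hsq
  have z1 := hqz a0 (b0+1) (by omega)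
  have z2 := hqz (a0+1) b0 (by omega)
  have z3 := hqz (a0+1) (b0+1) (by omega)
  obtain ha|ha := (by omega : a0 = 0 ∨ a0 = 1) <;>
    obtain hb|hb := (by omega : b0 = 0 ∨ b0 = 1) <;> subst ha hb <;>
    simp only [show (0:Fin 2)+1 = 1 from rfl, show (1:Fin 2)+1 = 0 from rfl] at z1 z2 z3 <;>
    linarith

/-- If `e*` maximizes the CHSH score among behaviours with signalling fraction at most
`σ` that are deterministic on the distinguished context `C`, then
`S^σ_C = score(e*) ≤ S_cl^{ξ=σ}`, and in particular `S^σ_C ≤ (3+σ)/4`. -/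
theorem distinguished_context_score_le
    (σ : ℝ) (hσ0 : 0 ≤ σ) (hσ1 : σ ≤ 1) (C : Fin 2 × Fin 2)
    (estar : Fin 2 → Fin 2 → Fin 2 → Fin 2 → ℝ)
    (hB : IsBehaviour estar)
    (hdet : ∃ a b : Fin 2, estar a b C.1 C.2 = 1)
    (hSF : SF estar ≤ σ)
    (hmax : ∀ p : Fin 2 → Fin 2 → Fin 2 → Fin 2 → ℝ,
      IsBehaviour p → (∃ a b : Fin 2, p a b C.1 C.2 = 1) → SF p ≤ σ →
        chshScore p ≤ chshScore estar) :
    chshScore estar ≤ SclRelaxed σ ∧ chshScore estar ≤ (3 + σ) / 4 := by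
  obtain ⟨a0, b0, h1⟩ := hdet
  set SFset := {s : ℝ | s ∈ Set.Icc (0:ℝ) 1 ∧
    ∃ q r : Fin 2 → Fin 2 → Fin 2 → Fin 2 → ℝ,
      IsNS q ∧ IsBehaviour q ∧ IsBehaviour r ∧
      ∀ a b x y, estar a b x y = s * q a b x y + (1 - s) * r a b x y} with hSFset
  set CFset := {s : ℝ | s ∈ Set.Icc (0:ℝ) 1 ∧
    ∃ q r : Fin 2 → Fin 2 → Fin 2 → Fin 2 → ℝ,
      IsNoncontextual q ∧ IsBehaviour q ∧ IsBehaviour r ∧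
      ∀ a b x y, estar a b x y = s * q a b x y + (1 - s) * r a b x y} with hCFset
  have hSF' : 1 - sSup SFset ≤ σ := hSF
  have hCF' : CF estar = 1 - sSup CFset := rfl
  have hSFne : (0:ℝ) ∈ SFset := by
    rw [hSFset]
    refine ⟨⟨le_refl 0, zero_le_one⟩, (fun _ _ _ _ => 1/4), estar, ?_, ?_, hB, ?_⟩
    · exact ⟨fun _ _ _ _ => rfl, fun _ _ _ _ => rfl⟩
    · refine ⟨fun _ _ _ _ => by norm_num, fun x y => by simp [Fin.sum_univ_two]; norm_num⟩
    · intro a b x y; ring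
  have hSFbdd : BddAbove SFset := ⟨1, fun s hs => hs.1.2⟩
  have hCFbdd : BddAbove CFset := ⟨1, fun s hs => hs.1.2⟩
  have hsup1 : 1 - σ ≤ sSup SFset := by linarith
  have hCF0 : (0:ℝ) ∈ CFset := by
    rw [hCFset]
    refine ⟨⟨le_refl 0, zero_le_one⟩, detBehaviour (fun _ => 0) (fun _ => 0), estar,
      det_nc _ _, det_is_behaviour _ _, hB, ?_⟩
    intro a b x y; ring
  have K : ∀ s ∈ SFset, 0 < s → s ∈ CFset := by
    rintro s ⟨⟨hs0, hs1⟩, q, r, hNS, hQ, hR, hdec⟩ hspos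
    exact ⟨⟨hs0, hs1⟩, q, r,
      decomp_nc estar q r s C.1 C.2 a0 b0 hB h1 hspos hs1 hNS hQ hR hdec, hQ, hR, hdec⟩
  have hsupCF : sSup SFset ≤ sSup CFset := by
    apply csSup_le ⟨0, hSFne⟩
    intro s hs
    rcases eq_or_lt_of_le hs.1.1 with h | h
    · rw [← h]; exact le_csSup hCFbdd hCF0
    · exact le_csSup hCFbdd (K s hs h)
  have hCFle : CF estar ≤ σ := by rw [hCF']; linarith
  constructor
  · apply le_csSup
    · refine ⟨1, fun S hS => ?_⟩
      obtain ⟨p, hp, _, hSp⟩ := hS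
      rw [hSp]
      exact behaviour_score_le_one p hp
    · exact ⟨estar, hB, hCFle, rfl⟩
  · have key : ∀ s ∈ SFset, chshScore estar ≤ 1 - s / 4 := by
      rintro s ⟨⟨hs0, hs1⟩, q, r, hNS, hQ, hR, hdec⟩
      rcases eq_or_lt_of_le hs0 with h | h
      · have := behaviour_score_le_one estar hB
        linarith
      · have hnc := decomp_nc estar q r s C.1 C.2 a0 b0 hB h1 h hs1 hNS hQ hR hdec
        have e0 := score_decomp estar q r s hdec
        have e1 : s * chshScore q ≤ s * (3/4) :=
          mul_le_mul_of_nonneg_left (nc_score_le q hnc) (le_of_lt h)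
        have e2 : (1 - s) * chshScore r ≤ (1 - s) * 1 :=
          mul_le_mul_of_nonneg_left (behaviour_score_le_one r hR) (by linarith)
        linarith
    have hfin : sSup SFset ≤ 4 - 4 * chshScore estar := by
      apply csSup_le ⟨0, hSFne⟩
      intro s hs
      linarith [key s hs]
    linarith
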